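/- arXiv:2310.20639 — 2 statements merged into one kernel-verified Lean document; each statement's English description precedes it below -/
import Mathlib

section
/- Let Bip(H) be a connected bipartite graph with a ribbon structure and basis, and let T be a Jaeger tree. Suppose ev ∉ T and the first node of the fundamental cycle C(T,ev) reached in the tour of T is not e. Then for each emerald node f of C(T,ev), either f = e or the last time f is visited in the tour of T is later than the last time e is visited. -/
variable {V E : Type*} [Fintype V] [Fintype E] [DecidableEq V] [DecidableEq E]

/-- The edge of the bipartite graph `Bip H` corresponding to an incidence `(e, v)`,
as an unordered pair of nodes in `V ⊕ E` (violet nodes `Sum.inl v`, emerald nodes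
`Sum.inr e`). -/
def bipSym2 (p : E × V) : Sym2 (V ⊕ E) := s(Sum.inl p.2, Sum.inr p.1)

/-- The underlying bipartite graph of the hypergraph with incidence relation `inc`. -/
def bipGraph (inc : E → V → Prop) : SimpleGraph (V ⊕ E) :=
  SimpleGraph.fromEdgeSet (bipSym2 '' {p | inc p.1 p.2})

/-- `T` is (the edge set of) a spanning tree of the bipartite graph `Bip H` of the
hypergraph with incidence relation `inc`. -/
def IsSpanningTreeB (inc : E → V → Prop) (T : Finset (E × V)) : Prop :=
  (∀ p ∈ T, inc p.1 p.2) ∧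
    (SimpleGraph.fromEdgeSet (↑(T.image bipSym2) : Set (Sym2 (V ⊕ E)))).IsTree

/-- The spanning tree `T` of `Bip H` represents the vector `h : E → ℤ`, i.e. `T` has
degree `h e + 1` at each emerald node `e`. -/
def Represents (T : Finset (E × V)) (h : E → ℤ) : Prop :=
  ∀ e : E, ((T.filter (fun p => p.1 = e)).card : ℤ) = h e + 1

/-- `h` is a hypertree of the hypergraph with incidence relation `inc`. -/
def IsHypertree (inc : E → V → Prop) (h : E → ℤ) : Prop :=
  ∃ T : Finset (E × V), IsSpanningTreeB inc T ∧ Represents T h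

/-- The edge `p` of `Bip H` is incident to the node `n`. -/
def IncTo (p : E × V) (n : V ⊕ E) : Prop := n = Sum.inl p.2 ∨ n = Sum.inr p.1

/-- A ribbon structure on the bipartite graph with incidence relation `inc`: at each
node, a cyclic permutation of the incident edges. -/
structure Ribbon (inc : E → V → Prop) where
  /-- the edge following `p` at the node `n` -/
  next : (V ⊕ E) → (E × V) → (E × V)
  next_mem : ∀ n p, inc p.1 p.2 → IncTo p n →
    inc (next n p).1 (next n p).2 ∧ IncTo (next n p) n
  cyclic : ∀ n p q, inc p.1 p.2 → IncTo p n → inc q.1 q.2 → IncTo q n →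
    ∃ k : ℕ, (next n)^[k] p = q

/-- The endpoint of the edge `p` other than `n`. -/
def otherEnd (n : V ⊕ E) (p : E × V) : V ⊕ E :=
  if n = Sum.inr p.1 then Sum.inl p.2 else Sum.inr p.1

variable {inc : E → V → Prop}

/-- One step of the tour of the spanning tree `T`: from the node-edge pair `(x, xy)`,
move to `(y, yx⁺)` if `xy ∈ T` and to `(x, xy⁺)` if `xy ∉ T`. -/
def tourStep (R : Ribbon inc) (T : Finset (E × V)) (s : (V ⊕ E) × (E × V)) :
    (V ⊕ E) × (E × V) :=
  if s.2 ∈ T then (otherEnd s.1 s.2, R.next (otherEnd s.1 s.2) s.2)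
  else (s.1, R.next s.1 s.2)

/-- The current node-edge pair of the tour of `T` (started at the basis `bas`)
after `k` steps. -/
def tourState (R : Ribbon inc) (T : Finset (E × V)) (bas : (V ⊕ E) × (E × V))
    (k : ℕ) : (V ⊕ E) × (E × V) :=
  (tourStep R T)^[k] bas

/-- `bas = (b₀, b₀b₁)` is a valid basis: `b₀b₁` is an edge of `Bip H` incident
to the node `b₀`. -/
def IsBasis (bas : (V ⊕ E) × (E × V)) : Prop :=
  inc bas.2.1 bas.2.2 ∧ IncTo bas.2 bas.1

/-- `T` is a Jaeger tree: a spanning tree in whose tour every non-tree edge is first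
seen at its emerald endpoint. -/
def IsJaeger (R : Ribbon inc) (bas : (V ⊕ E) × (E × V)) (T : Finset (E × V)) : Prop :=
  IsSpanningTreeB inc T ∧
    ∀ p : E × V, inc p.1 p.2 → p ∉ T →
      ∃ k : ℕ, tourState R T bas k = (Sum.inr p.1, p) ∧
        ∀ j ≤ k, tourState R T bas j ≠ (Sum.inl p.2, p)

/-- The tour of `T` first reaches the node `n` (strictly) before it first reaches
the node `m`. -/
def reachedBefore (R : Ribbon inc) (T : Finset (E × V)) (bas : (V ⊕ E) × (E × V))
    (n m : V ⊕ E) : Prop :=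
  ∃ k : ℕ, (tourState R T bas k).1 = n ∧ ∀ j ≤ k, (tourState R T bas j).1 ≠ m

/-- The order `<_h` on hyperedges: `e <_h f` if the tour of the Jaeger tree
representing `h` reaches `e` before `f`. -/
def emLt (R : Ribbon inc) (bas : (V ⊕ E) × (E × V)) (h : E → ℤ) (e f : E) : Prop :=
  ∃ T : Finset (E × V), IsJaeger R bas T ∧ Represents T h ∧
    reachedBefore R T bas (Sum.inr e) (Sum.inr f)

/-- `e` is internally embedding active for the hypertree `h`. -/
def IntEmActive (R : Ribbon inc) (bas : (V ⊕ E) × (E × V)) (h : E → ℤ) (e : E) :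
    Prop :=
  ∀ f : E, emLt R bas h f e →
    ¬ IsHypertree inc (fun x => h x - (if x = e then 1 else 0) + (if x = f then 1 else 0))

/-- `e` is externally embedding active for the hypertree `h`. -/
def ExtEmActive (R : Ribbon inc) (bas : (V ⊕ E) × (E × V)) (h : E → ℤ) (e : E) :
    Prop :=
  ∀ f : E, emLt R bas h f e →
    ¬ IsHypertree inc (fun x => h x + (if x = e then 1 else 0) - (if x = f then 1 else 0))

/-- The embedding Crapo interval of the hypertree `h`. -/
def CrapoEm (R : Ribbon inc) (bas : (V ⊕ E) × (E × V)) (h : E → ℤ) : Set (E → ℤ) :=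
  {y | ∀ e : E, (h e < y e → ExtEmActive R bas h e) ∧
    (y e < h e → IntEmActive R bas h e)}

/-- The first difference between the tours of `T` and `T'` is at the node-edge
pair `s`. -/
def FirstDiffAt (R : Ribbon inc) (T T' : Finset (E × V)) (bas : (V ⊕ E) × (E × V))
    (s : (V ⊕ E) × (E × V)) : Prop :=
  ∃ k : ℕ, (∀ j ≤ k, tourState R T bas j = tourState R T' bas j) ∧
    tourState R T bas k = s ∧
    tourState R T bas (k + 1) ≠ tourState R T' bas (k + 1)

/-- `n` is a node of the fundamental cycle `C(T, p)` of the non-tree edge `p`: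
it is an endpoint of `p` or of a tree edge whose exchange with `p` again gives a
spanning tree. -/
def NodeOnFundCycle (inc : E → V → Prop) (T : Finset (E × V)) (p : E × V)
    (n : V ⊕ E) : Prop :=
  IncTo p n ∨ ∃ q ∈ T, IncTo q n ∧ IsSpanningTreeB inc (insert p (T.erase q))

/-! ### Auxiliary development -/
set_option linter.unusedSectionVars false
set_option maxHeartbeats 1000000

open SimpleGraph

section Graphs

lemma jt_bipSym2_inj : Function.Injective (bipSym2 (E := E) (V := V)) := by
  intro p q h
  simp only [bipSym2, Sym2.eq_iff] at h
  rcases h with ⟨h1, h2⟩ | ⟨h1, h2⟩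
  · exact Prod.ext (Sum.inr.inj (α := V) h2) (Sum.inl.inj h1)
  · exact absurd h1 (by simp)

/-- The simple graph on `V ⊕ E` with edge set (the image of) `S`. -/
def jtG (S : Finset (E × V)) : SimpleGraph (V ⊕ E) :=
  SimpleGraph.fromEdgeSet (↑(S.image bipSym2))

lemma jtG_adj {S : Finset (E × V)} {x y : V ⊕ E} :
    (jtG S).Adj x y ↔ ∃ r ∈ S,
      (x = Sum.inl r.2 ∧ y = Sum.inr r.1) ∨ (x = Sum.inr r.1 ∧ y = Sum.inl r.2) := by
  constructor
  · intro h
    rw [jtG, fromEdgeSet_adj] at h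
    obtain ⟨hm, hne⟩ := h
    simp only [Finset.coe_image, Set.mem_image, Finset.mem_coe] at hm
    obtain ⟨r, hr, he⟩ := hm
    refine ⟨r, hr, ?_⟩
    rw [bipSym2, Sym2.eq_iff] at he
    rcases he with ⟨h1, h2⟩ | ⟨h1, h2⟩
    · exact Or.inl ⟨h1.symm, h2.symm⟩
    · exact Or.inr ⟨h2.symm, h1.symm⟩
  · rintro ⟨r, hr, h⟩
    rw [jtG, fromEdgeSet_adj]
    constructor
    · simp only [Finset.coe_image, Set.mem_image, Finset.mem_coe]
      refine ⟨r, hr, ?_⟩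
      rw [bipSym2]
      rcases h with ⟨h1, h2⟩ | ⟨h1, h2⟩ <;> subst h1 <;> subst h2
      · rfl
      · rw [Sym2.eq_swap]
    · rcases h with ⟨h1, h2⟩ | ⟨h1, h2⟩ <;> subst h1 <;> subst h2
      · exact fun h => Sum.inl_ne_inr h
      · exact fun h => Sum.inl_ne_inr h.symm

lemma jtG_mono {S S' : Finset (E × V)} (h : S ⊆ S') : jtG S ≤ jtG S' := by
  apply fromEdgeSet_mono
  exact_mod_cast Finset.image_subset_image h

/-- The set of nodes on the same side as `z` after deleting an edge. -/
def jtSide (S : Finset (E × V)) (z : V ⊕ E) : Set (V ⊕ E) :=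
  {n | (jtG S).Reachable n z}

lemma jtSide_self {S : Finset (E × V)} {z : V ⊕ E} : z ∈ jtSide S z := Reachable.refl z

lemma jtSide_adj {S : Finset (E × V)} {x y z : V ⊕ E} (h : (jtG S).Adj x y)
    (hy : y ∈ jtSide S z) : x ∈ jtSide S z := h.reachable.trans hy

lemma jtSide_reach {S : Finset (E × V)} {x y z : V ⊕ E} (h : (jtG S).Reachable x y)
    (hy : y ∈ jtSide S z) : x ∈ jtSide S z := h.trans hy

lemma jtSide_symm_trans {S : Finset (E × V)} {x z z' : V ⊕ E} (hx : x ∈ jtSide S z)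
    (hx' : x ∈ jtSide S z') : z ∈ jtSide S z' := (Reachable.symm hx).trans hx'


lemma jt_reach_cross {T : Finset (E × V)} {r : E × V} (hr : r ∈ T) {n m : V ⊕ E}
    (h : (jtG T).Reachable n m) :
    (jtG (T.erase r)).Reachable n m ∨
      ((jtG (T.erase r)).Reachable n (Sum.inl r.2) ∧
        (jtG (T.erase r)).Reachable m (Sum.inr r.1)) ∨
      ((jtG (T.erase r)).Reachable n (Sum.inr r.1) ∧
        (jtG (T.erase r)).Reachable m (Sum.inl r.2)) := by
  obtain ⟨w⟩ := h
  induction w with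
  | nil => exact Or.inl (Reachable.refl _)
  | @cons u x m hadj w ih =>
    obtain ⟨r', hr', hor⟩ := jtG_adj.mp hadj
    by_cases hrr : r' = r
    · subst hrr
      -- u and x are the two endpoints of r'
      rcases ih with hreach | ⟨h1, h2⟩ | ⟨h1, h2⟩
      · rcases hor with ⟨hu, hx⟩ | ⟨hu, hx⟩
        · exact Or.inr (Or.inl ⟨hu ▸ Reachable.refl _, hx ▸ hreach.symm⟩)
        · exact Or.inr (Or.inr ⟨hu ▸ Reachable.refl _, hx ▸ hreach.symm⟩)
      · rcases hor with ⟨hu, hx⟩ | ⟨hu, hx⟩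
        · -- u = inl, x = inr ; x reaches inl : contradiction-free: m reaches inr
          -- h1 : x reaches inl r'.2 ; so u (=inl) reaches x?? no.
          -- m reaches inr r'.1 = x ; u = inl r'.2 : u reaches inl (refl), m reaches inr : done
          exact Or.inr (Or.inl ⟨hu ▸ Reachable.refl _, h2⟩)
        · -- u = inr, x = inl ; h1 : x reaches inl (refl-ish), h2 : m reaches inr r'.1 = u
          exact Or.inl ((hu ▸ h2).symm)
      · rcases hor with ⟨hu, hx⟩ | ⟨hu, hx⟩
        · -- u = inl, x = inr ; h2 : m reaches inl r'.2 = u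
          exact Or.inl ((hu ▸ h2).symm)
        · exact Or.inr (Or.inr ⟨hu ▸ Reachable.refl _, h2⟩)
    · have hadj' : (jtG (T.erase r)).Adj u x :=
        jtG_adj.mpr ⟨r', Finset.mem_erase.mpr ⟨hrr, hr'⟩, hor⟩
      rcases ih with hreach | ⟨h1, h2⟩ | ⟨h1, h2⟩
      · exact Or.inl (hadj'.reachable.trans hreach)
      · exact Or.inr (Or.inl ⟨hadj'.reachable.trans h1, h2⟩)
      · exact Or.inr (Or.inr ⟨hadj'.reachable.trans h1, h2⟩)

lemma jt_side_disj {T : Finset (E × V)} (hT : IsSpanningTreeB inc T) {r : E × V}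
    (hr : r ∈ T) :
    ¬ (jtG (T.erase r)).Reachable (Sum.inl r.2) (Sum.inr r.1) := by
  intro hreach
  have htree : (jtG T).IsTree := hT.2
  have hedge : s(Sum.inl (r.2 : V), Sum.inr (r.1 : E)) ∈ (jtG T).edgeSet := by
    rw [jtG, edgeSet_fromEdgeSet]
    constructor
    · simp only [Finset.coe_image, Set.mem_image, Finset.mem_coe]
      exact ⟨r, hr, rfl⟩
    · simp only [Set.mem_setOf_eq, Sym2.mem_diagSet, Sym2.isDiag_iff_proj_eq]
      exact fun h => Sum.inl_ne_inr h
  have hbridge := (isAcyclic_iff_forall_edge_isBridge.mp htree.IsAcyclic) hedge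
  rw [isBridge_iff] at hbridge
  apply hbridge
  refine hreach.mono ?_
  intro x y hxy
  obtain ⟨r', hr', hor⟩ := jtG_adj.mp hxy
  rw [deleteEdges, sdiff_adj]
  constructor
  · exact jtG_adj.mpr ⟨r', Finset.mem_of_mem_erase hr', hor⟩
  · rw [fromEdgeSet_adj]
    rintro ⟨hmem, -⟩
    simp only [Set.mem_singleton_iff] at hmem
    have : bipSym2 r' = bipSym2 r := by
      rw [bipSym2, bipSym2]
      rcases hor with ⟨h1, h2⟩ | ⟨h1, h2⟩
      · rw [← h1, ← h2]; exact hmem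
      · rw [← h1, ← h2]; rw [Sym2.eq_swap]; exact hmem
    exact (Finset.mem_erase.mp hr').1 (jt_bipSym2_inj this)

lemma jt_side_total {T : Finset (E × V)} (hT : IsSpanningTreeB inc T) {r : E × V}
    (hr : r ∈ T) (n : V ⊕ E) :
    n ∈ jtSide (T.erase r) (Sum.inl r.2) ∨ n ∈ jtSide (T.erase r) (Sum.inr r.1) := by
  have hreach : (jtG T).Reachable n (Sum.inl r.2) := hT.2.isConnected.preconnected n _
  rcases jt_reach_cross hr hreach with h | ⟨h1, h2⟩ | ⟨h1, h2⟩
  · exact Or.inl h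
  · exact Or.inl h1
  · exact Or.inr h1

lemma jt_reach_erase_of_not_support {S : Finset (E × V)} {r : E × V} {x z : V ⊕ E}
    {zz : V ⊕ E} (hzz : zz = Sum.inl r.2 ∨ zz = Sum.inr r.1)
    (w : (jtG S).Walk x z) (hsup : zz ∉ w.support) :
    (jtG (S.erase r)).Reachable x z := by
  induction w with
  | nil => exact Reachable.refl _
  | @cons u y m hadj w ih =>
    simp only [SimpleGraph.Walk.support_cons, List.mem_cons] at hsup
    push_neg at hsup
    obtain ⟨r', hr', hor⟩ := jtG_adj.mp hadj
    have hrr : r' ≠ r := by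
      rintro rfl
      rcases hzz with h | h <;> rcases hor with ⟨h1, h2⟩ | ⟨h1, h2⟩
      · exact hsup.1 (h.trans h1.symm)
      · exact hsup.2 (by rw [h, ← h2]; exact SimpleGraph.Walk.start_mem_support w)
      · exact hsup.2 (by rw [h, ← h2]; exact SimpleGraph.Walk.start_mem_support w)
      · exact hsup.1 (h.trans h1.symm)
    have hadj' : (jtG (S.erase r)).Adj u y :=
      jtG_adj.mpr ⟨r', Finset.mem_erase.mpr ⟨hrr, hr'⟩, hor⟩
    exact hadj'.reachable.trans (ih hsup.2)

lemma jt_reach_erase_of_far {S : Finset (E × V)} {r : E × V} {x z : V ⊕ E}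
    {zz : V ⊕ E} (hzz : zz = Sum.inl r.2 ∨ zz = Sum.inr r.1)
    (hreach : (jtG S).Reachable x z) (hfar : ¬ (jtG S).Reachable zz z) :
    (jtG (S.erase r)).Reachable x z := by
  obtain ⟨w⟩ := hreach
  refine jt_reach_erase_of_not_support hzz w fun hmem => hfar ⟨w.dropUntil zz hmem⟩

end Graphs


section Tour

variable (R : Ribbon inc) (T : Finset (E × V)) (bas : (V ⊕ E) × (E × V)) {L : ℕ}

/-- A node-edge pair is valid. -/
def jtValid (inc : E → V → Prop) (s : (V ⊕ E) × (E × V)) : Prop := inc s.2.1 s.2.2 ∧ IncTo s.2 s.1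

lemma jt_incTo_otherEnd (n : V ⊕ E) (q : E × V) : IncTo q (otherEnd n q) := by
  rw [otherEnd]
  split
  · exact Or.inl rfl
  · exact Or.inr rfl

variable {R T bas}

lemma jt_valid_step {s : (V ⊕ E) × (E × V)} (h : jtValid inc s) : jtValid inc (tourStep R T s) := by
  rw [tourStep]
  split
  · exact ⟨(R.next_mem _ _ h.1 (jt_incTo_otherEnd _ _)).1,
      (R.next_mem _ _ h.1 (jt_incTo_otherEnd _ _)).2⟩
  · exact ⟨(R.next_mem _ _ h.1 h.2).1, (R.next_mem _ _ h.1 h.2).2⟩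

lemma jt_valid_state (hbas : IsBasis (inc := inc) bas) (k : ℕ) :
    jtValid inc (tourState R T bas k) := by
  induction k with
  | zero => exact ⟨hbas.1, hbas.2⟩
  | succ k ih =>
    rw [tourState, Function.iterate_succ_apply']
    exact jt_valid_step ih

lemma jt_state_succ (k : ℕ) :
    tourState R T bas (k + 1) = tourStep R T (tourState R T bas k) := by
  rw [tourState, tourState, Function.iterate_succ_apply']

lemma jt_state_add (m k : ℕ) :
    tourState R T bas (m + k) = (tourStep R T)^[m] (tourState R T bas k) := by
  rw [tourState, tourState, Function.iterate_add_apply]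

lemma jt_per (hL2 : tourState R T bas L = bas) (k : ℕ) :
    tourState R T bas (k + L) = tourState R T bas k := by
  rw [jt_state_add k L, hL2]
  rfl

lemma jt_mod (hL0 : 0 < L) (hL2 : tourState R T bas L = bas) (k : ℕ) :
    tourState R T bas k = tourState R T bas (k % L) := by
  induction k using Nat.strong_induction_on with
  | _ k ih =>
    by_cases h : k < L
    · rw [Nat.mod_eq_of_lt h]
    · push_neg at h
      have hk : k = (k - L) + L := by omega
      rw [hk, jt_per hL2, ih (k - L) (by omega)]
      congr 1
      rw [Nat.add_mod_right]

lemma jt_uniq (hL0 : 0 < L) (hL2 : tourState R T bas L = bas)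
    (hL3 : ∀ j, 0 < j → j < L → tourState R T bas j ≠ bas)
    {a b : ℕ} (ha : a < L) (hb : b < L) (h : tourState R T bas a = tourState R T bas b) :
    a = b := by
  have key : ∀ a b : ℕ, a < b → b < L → tourState R T bas a = tourState R T bas b → False := by
    intro a b hab hbL heq
    have h1 : tourState R T bas ((L - b) + a) = tourState R T bas ((L - b) + b) := by
      rw [jt_state_add, jt_state_add, heq]
    have h2 : (L - b) + b = L := by omega
    rw [h2, hL2] at h1
    exact hL3 ((L - b) + a) (by omega) (by omega) h1
  rcases lt_trichotomy a b with h' | h' | h'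
  · exact absurd h (fun h => key a b h' hb h)
  · exact h'
  · exact absurd h.symm (fun h => key b a h' ha h)


lemma jt_side_step {q : E × V} (hq : q ∈ T) {c d : V ⊕ E}
    (hcd : (c = Sum.inl q.2 ∧ d = Sum.inr q.1) ∨ (c = Sum.inr q.1 ∧ d = Sum.inl q.2))
    (hdnot : d ∉ jtSide (T.erase q) c)
    {s : (V ⊕ E) × (E × V)} (hv : jtValid inc s)
    (hs : s.1 ∈ jtSide (T.erase q) c) (hne : s ≠ (c, q)) :
    (tourStep R T s).1 ∈ jtSide (T.erase q) c := by
  rw [tourStep]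
  split
  case isTrue hmem =>
    by_cases hsq : s.2 = q
    · exfalso
      have h2 := hv.2
      rw [hsq] at h2
      have hs1 : s.1 = c := by
        rcases h2 with h | h <;> rcases hcd with ⟨h1, h2'⟩ | ⟨h1, h2'⟩
        · exact h.trans h1.symm
        · exfalso; apply hdnot; rw [h2']; rw [h] at hs; exact hs
        · exfalso; apply hdnot; rw [h2']; rw [h] at hs; exact hs
        · exact h.trans h1.symm
      exact hne (by rw [← hs1, ← hsq])
    · have hadj : (jtG (T.erase q)).Adj s.1 (otherEnd s.1 s.2) := by
        apply jtG_adj.mpr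
        refine ⟨s.2, Finset.mem_erase.mpr ⟨hsq, hmem⟩, ?_⟩
        rcases hv.2 with h | h
        · left
          refine ⟨h, ?_⟩
          rw [otherEnd, if_neg (by rw [h]; exact fun hh => Sum.inl_ne_inr hh)]
        · right
          exact ⟨h, by rw [otherEnd, if_pos h]⟩
      exact jtSide_adj hadj.symm hs
  case isFalse => exact hs

lemma jt_upcross {q : E × V} (hq : q ∈ T) {c d : V ⊕ E}
    (hcd : (c = Sum.inl q.2 ∧ d = Sum.inr q.1) ∨ (c = Sum.inr q.1 ∧ d = Sum.inl q.2))
    (hdnot : d ∉ jtSide (T.erase q) c)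
    (hbas : IsBasis (inc := inc) bas) {t u : ℕ}
    (ht : (tourState R T bas t).1 ∈ jtSide (T.erase q) c) (htu : t ≤ u)
    (hu : (tourState R T bas u).1 ∉ jtSide (T.erase q) c) :
    ∃ cc, t ≤ cc ∧ cc < u ∧ tourState R T bas cc = (c, q) := by
  by_contra hcon
  push_neg at hcon
  have key : ∀ m, t + m ≤ u → (tourState R T bas (t + m)).1 ∈ jtSide (T.erase q) c := by
    intro m
    induction m with
    | zero => intro _; exact ht
    | succ m ih =>
      intro hm
      have hprev := ih (by omega)
      have hne : tourState R T bas (t + m) ≠ (c, q) := hcon (t + m) (by omega) (by omega)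
      have : t + (m + 1) = (t + m) + 1 := by omega
      rw [this, jt_state_succ]
      exact jt_side_step hq hcd hdnot (jt_valid_state hbas _) hprev hne
  have hk := key (u - t) (by omega)
  rw [show t + (u - t) = u by omega] at hk
  exact hu hk

lemma jt_corner_succ (hsT : IsSpanningTreeB inc T) (hbas : IsBasis (inc := inc) bas)
    (hL0 : 0 < L) (hL2 : tourState R T bas L = bas)
    {t : ℕ} {n : V ⊕ E} {r : E × V} (hst : tourState R T bas t = (n, r)) :
    ∃ u, t < u ∧ tourState R T bas u = (n, R.next n r) ∧
      ∀ j, t < j → j < u → (tourState R T bas j).1 ≠ n := by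
  by_cases hrT : r ∈ T
  · have hval : jtValid inc (n, r) := by rw [← hst]; exact jt_valid_state hbas t
    have hIncn : IncTo r n := hval.2
    set m := otherEnd n r with hm
    have hnm : (m = Sum.inl r.2 ∧ n = Sum.inr r.1) ∨ (m = Sum.inr r.1 ∧ n = Sum.inl r.2) := by
      rcases hIncn with h | h
      · right
        refine ⟨?_, h⟩
        rw [hm, otherEnd, if_neg (by rw [h]; exact fun hh => Sum.inl_ne_inr hh)]
      · left
        exact ⟨by rw [hm, otherEnd, if_pos h], h⟩
    have hmn : otherEnd m r = n := by
      rcases hnm with ⟨h1, h2⟩ | ⟨h1, h2⟩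
      · rw [otherEnd, if_neg (by rw [h1]; exact fun hh => Sum.inl_ne_inr hh), h2]
      · rw [otherEnd, if_pos h1, h2]
    have hmne : m ≠ n := by
      rcases hnm with ⟨h1, h2⟩ | ⟨h1, h2⟩
      · rw [h1, h2]; exact fun hh => Sum.inl_ne_inr hh
      · rw [h1, h2]; exact fun hh => Sum.inl_ne_inr hh.symm
    have hdnot : n ∉ jtSide (T.erase r) m := by
      intro hmem
      have hdisj := jt_side_disj hsT hrT
      rcases hnm with ⟨h1, h2⟩ | ⟨h1, h2⟩
      · rw [h1, h2] at hmem; exact hdisj hmem.symm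
      · rw [h1, h2] at hmem; exact hdisj hmem
    have hst1 : tourState R T bas (t + 1) = (m, R.next m r) := by
      rw [jt_state_succ, hst, tourStep, if_pos hrT]
    have hex : ∃ k, (tourState R T bas (t + 1 + k)).1 = n := by
      refine ⟨L - 1, ?_⟩
      have h1 : t + 1 + (L - 1) = t + L := by omega
      rw [h1, jt_per hL2, hst]
    classical
    have hfind := Nat.find_spec hex
    have hside : ∀ k, k < Nat.find hex → (tourState R T bas (t + 1 + k)).1 ∈ jtSide (T.erase r) m := by
      intro k
      induction k with
      | zero => intro _; rw [hst1]; exact jtSide_self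
      | succ k ih =>
        intro hk
        have hprev := ih (by omega)
        by_cases hcross : tourState R T bas (t + 1 + k) = (m, r)
        · exfalso
          have : tourState R T bas (t + 1 + (k + 1)) = (n, R.next n r) := by
            rw [show t + 1 + (k + 1) = (t + 1 + k) + 1 by omega, jt_state_succ, hcross,
              tourStep, if_pos hrT, hmn]
          exact Nat.find_min hex hk (by rw [this])
        · rw [show t + 1 + (k + 1) = (t + 1 + k) + 1 by omega, jt_state_succ]
          exact jt_side_step hrT hnm hdnot (jt_valid_state hbas _) hprev hcross
    have hfindpos : 0 < Nat.find hex := by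
      rcases Nat.eq_zero_or_pos (Nat.find hex) with h | h
      · exfalso
        have := hfind
        rw [h] at this
        rw [show t + 1 + 0 = t + 1 by omega, hst1] at this
        exact hmne this
      · exact h
    have hk1 : Nat.find hex - 1 < Nat.find hex := by omega
    have hlast := hside _ hk1
    have hcross : tourState R T bas (t + 1 + (Nat.find hex - 1)) = (m, r) := by
      by_contra hcc
      have := jt_side_step (R := R) hrT hnm hdnot (jt_valid_state hbas _) hlast hcc
      rw [← jt_state_succ] at this
      rw [show t + 1 + (Nat.find hex - 1) + 1 = t + 1 + Nat.find hex by omega] at this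
      rw [hfind] at this
      exact hdnot this
    refine ⟨t + 1 + Nat.find hex, by omega, ?_, ?_⟩
    · rw [show t + 1 + Nat.find hex = (t + 1 + (Nat.find hex - 1)) + 1 by omega,
        jt_state_succ, hcross, tourStep, if_pos hrT, hmn]
    · intro j hj1 hj2
      have : j = t + 1 + (j - t - 1) := by omega
      rw [this]
      exact Nat.find_min hex (by omega)
  · refine ⟨t + 1, by omega, ?_, by omega⟩
    rw [jt_state_succ, hst, tourStep, if_neg hrT]

lemma jt_corner_iter (hsT : IsSpanningTreeB inc T) (hbas : IsBasis (inc := inc) bas)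
    (hL0 : 0 < L) (hL2 : tourState R T bas L = bas) (k : ℕ) :
    ∀ {t : ℕ} {n : V ⊕ E} {r : E × V}, tourState R T bas t = (n, r) →
    ∃ u, tourState R T bas u = (n, (R.next n)^[k] r) := by
  induction k with
  | zero => intro t n r hst; exact ⟨t, hst⟩
  | succ k ih =>
    intro t n r hst
    obtain ⟨u, -, hu, -⟩ := jt_corner_succ hsT hbas hL0 hL2 hst
    obtain ⟨u', hu'⟩ := ih hu
    rw [← Function.iterate_succ_apply] at hu'
    exact ⟨u', hu'⟩

lemma jt_corner_of_visit (hsT : IsSpanningTreeB inc T) (hbas : IsBasis (inc := inc) bas)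
    (hL0 : 0 < L) (hL2 : tourState R T bas L = bas)
    {t : ℕ} {n : V ⊕ E} (hvis : (tourState R T bas t).1 = n)
    {r : E × V} (hincr : inc r.1 r.2) (hr : IncTo r n) :
    ∃ u, tourState R T bas u = (n, r) := by
  have hval := jt_valid_state hbas (R := R) (T := T) (bas := bas) t
  have hst : tourState R T bas t = (n, (tourState R T bas t).2) := by
    rw [← hvis]
  have hIncTo : IncTo (tourState R T bas t).2 n := by rw [← hvis]; exact hval.2
  obtain ⟨k, hk⟩ := R.cyclic n (tourState R T bas t).2 r hval.1 hIncTo hincr hr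
  obtain ⟨u, hu⟩ := jt_corner_iter hsT hbas hL0 hL2 k hst
  rw [hk] at hu
  exact ⟨u, hu⟩

lemma jt_visit_spread (hsT : IsSpanningTreeB inc T) (hbas : IsBasis (inc := inc) bas)
    (hL0 : 0 < L) (hL2 : tourState R T bas L = bas) {u x : V ⊕ E}
    (hu : ∃ t, (tourState R T bas t).1 = u) (hadj : (jtG T).Adj u x) :
    ∃ t, (tourState R T bas t).1 = x := by
  obtain ⟨t, ht⟩ := hu
  obtain ⟨r', hr', hor⟩ := jtG_adj.mp hadj
  have hinc : inc r'.1 r'.2 := hsT.1 r' hr'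
  have hIncu : IncTo r' u := by
    rcases hor with ⟨h1, h2⟩ | ⟨h1, h2⟩
    · exact Or.inl h1
    · exact Or.inr h1
  obtain ⟨s, hs⟩ := jt_corner_of_visit hsT hbas hL0 hL2 ht hinc hIncu
  refine ⟨s + 1, ?_⟩
  rw [jt_state_succ, hs, tourStep, if_pos hr']
  show otherEnd u r' = x
  rcases hor with ⟨rfl, rfl⟩ | ⟨rfl, rfl⟩
  · simp [otherEnd]
  · simp [otherEnd]

lemma jt_visit_walk (hsT : IsSpanningTreeB inc T) (hbas : IsBasis (inc := inc) bas)
    (hL0 : 0 < L) (hL2 : tourState R T bas L = bas) {u n : V ⊕ E}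
    (w : (jtG T).Walk u n) (hu : ∃ t, (tourState R T bas t).1 = u) :
    ∃ t, (tourState R T bas t).1 = n := by
  induction w with
  | nil => exact hu
  | cons hadj w ih => exact ih (jt_visit_spread hsT hbas hL0 hL2 hu hadj)

lemma jt_visit_all (hsT : IsSpanningTreeB inc T) (hbas : IsBasis (inc := inc) bas)
    (hL0 : 0 < L) (hL2 : tourState R T bas L = bas) (n : V ⊕ E) :
    ∃ t, (tourState R T bas t).1 = n := by
  obtain ⟨w⟩ : (jtG T).Reachable bas.1 n := hsT.2.isConnected.preconnected _ _
  exact jt_visit_walk hsT hbas hL0 hL2 w ⟨0, rfl⟩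

lemma jt_corner_exists (hsT : IsSpanningTreeB inc T) (hbas : IsBasis (inc := inc) bas)
    (hL0 : 0 < L) (hL2 : tourState R T bas L = bas)
    {n : V ⊕ E} {r : E × V} (hincr : inc r.1 r.2) (hr : IncTo r n) :
    ∃ t, t < L ∧ tourState R T bas t = (n, r) := by
  obtain ⟨t, ht⟩ := jt_visit_all hsT hbas hL0 hL2 n
  obtain ⟨u, hu⟩ := jt_corner_of_visit hsT hbas hL0 hL2 ht hincr hr
  exact ⟨u % L, Nat.mod_lt _ hL0, (jt_mod hL0 hL2 u).symm.trans hu⟩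


lemma jt_side_pair_disj {S : Finset (E × V)} {c d x : V ⊕ E}
    (hdisj : ¬ (jtG S).Reachable c d) (hx : x ∈ jtSide S c) (hx' : x ∈ jtSide S d) :
    False := hdisj (jtSide_symm_trans hx hx')

lemma jt_blockF {q : E × V} (hq : q ∈ T) {c d : V ⊕ E}
    (hcd : (c = Sum.inl q.2 ∧ d = Sum.inr q.1) ∨ (c = Sum.inr q.1 ∧ d = Sum.inl q.2))
    (hdisj : ¬ (jtG (T.erase q)).Reachable c d)
    (hbas : IsBasis (inc := inc) bas)
    (hL0 : 0 < L) (hL2 : tourState R T bas L = bas)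
    (hL3 : ∀ j, 0 < j → j < L → tourState R T bas j ≠ bas)
    {cA cB : ℕ} (hcAL : cA < L) (hscA : tourState R T bas cA = (c, q))
    (hcBL : cB < L) (hscB : tourState R T bas cB = (d, q))
    (hbas0 : bas.1 ∈ jtSide (T.erase q) d)
    {t : ℕ} (htL : t < L) (ht : (tourState R T bas t).1 ∈ jtSide (T.erase q) c) :
    cB < t ∧ t ≤ cA := by
  have hdisj' : ¬ (jtG (T.erase q)).Reachable d c := fun h => hdisj h.symm
  have hcd' : (d = Sum.inl q.2 ∧ c = Sum.inr q.1) ∨ (d = Sum.inr q.1 ∧ c = Sum.inl q.2) := by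
    rcases hcd with ⟨h1, h2⟩ | ⟨h1, h2⟩
    · exact Or.inr ⟨h2, h1⟩
    · exact Or.inl ⟨h2, h1⟩
  have hcnotd : c ∉ jtSide (T.erase q) d := fun h =>
    jt_side_pair_disj hdisj (jtSide_self) h
  have hdnotc : d ∉ jtSide (T.erase q) c := fun h =>
    jt_side_pair_disj hdisj' (jtSide_self) h
  constructor
  · have h0 : (tourState R T bas 0).1 ∈ jtSide (T.erase q) d := hbas0
    have htnot : (tourState R T bas t).1 ∉ jtSide (T.erase q) d := fun h =>
      jt_side_pair_disj hdisj' h ht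
    obtain ⟨cc, -, hcct, hscc⟩ := jt_upcross hq hcd' hcnotd hbas h0 (Nat.zero_le t) htnot
    have : cc = cB := jt_uniq hL0 hL2 hL3 (lt_trans hcct htL) hcBL (hscc.trans hscB.symm)
    omega
  · have hL1 : (tourState R T bas L).1 ∈ jtSide (T.erase q) d := by rw [hL2]; exact hbas0
    have hLnot : (tourState R T bas L).1 ∉ jtSide (T.erase q) c := fun h =>
      jt_side_pair_disj hdisj' hL1 h
    obtain ⟨cc, hccl, hccu, hscc⟩ := jt_upcross hq hcd hdnotc hbas ht (le_of_lt htL) hLnot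
    have : cc = cA := jt_uniq hL0 hL2 hL3 hccu hcAL (hscc.trans hscA.symm)
    omega

lemma jt_blockF' {q : E × V} (hq : q ∈ T) {c d : V ⊕ E}
    (hcd : (c = Sum.inl q.2 ∧ d = Sum.inr q.1) ∨ (c = Sum.inr q.1 ∧ d = Sum.inl q.2))
    (hdisj : ¬ (jtG (T.erase q)).Reachable c d)
    (hbas : IsBasis (inc := inc) bas)
    (hL0 : 0 < L) (hL2 : tourState R T bas L = bas)
    (hL3 : ∀ j, 0 < j → j < L → tourState R T bas j ≠ bas)
    {cA cB : ℕ} (hcAL : cA < L) (hscA : tourState R T bas cA = (c, q))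
    (hcBL : cB < L) (hscB : tourState R T bas cB = (d, q))
    {t : ℕ} (htL : t < L) (ht : (tourState R T bas t).1 ∈ jtSide (T.erase q) c) :
    t ≤ cA ∨ cB < t := by
  by_contra hcon
  push_neg at hcon
  obtain ⟨h1, h2⟩ := hcon
  have hdisj' : ¬ (jtG (T.erase q)).Reachable d c := fun h => hdisj h.symm
  have hdnotc : d ∉ jtSide (T.erase q) c := fun h =>
    jt_side_pair_disj hdisj' (jtSide_self) h
  have hcBnot : (tourState R T bas cB).1 ∉ jtSide (T.erase q) c := by
    rw [hscB]
    exact hdnotc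
  obtain ⟨cc, hccl, hccu, hscc⟩ := jt_upcross hq hcd hdnotc hbas ht h2 hcBnot
  have : cc = cA := jt_uniq hL0 hL2 hL3 (by omega) hcAL (hscc.trans hscA.symm)
  omega

lemma jt_cross_next {q : E × V} (hq : q ∈ T) {c d : V ⊕ E}
    (hcd : (c = Sum.inl q.2 ∧ d = Sum.inr q.1) ∨ (c = Sum.inr q.1 ∧ d = Sum.inl q.2))
    {cA : ℕ} (hscA : tourState R T bas cA = (c, q)) :
    (tourState R T bas (cA + 1)).1 = d := by
  rw [jt_state_succ, hscA, tourStep, if_pos hq]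
  show otherEnd c q = d
  rcases hcd with ⟨rfl, rfl⟩ | ⟨rfl, rfl⟩
  · simp [otherEnd]
  · simp [otherEnd]

end Tour

section Sep

variable {T : Finset (E × V)} {p : E × V}

/-- The tree edge `q` separates the two endpoints of the non-tree edge `p`. -/
def jtSEP (T : Finset (E × V)) (p q : E × V) : Prop :=
  q ∈ T ∧ ¬ (jtG (T.erase q)).Reachable (Sum.inl p.2) (Sum.inr p.1)

lemma jt_sep_of_swap (hpT : p ∉ T) {q : E × V} (hq : q ∈ T)
    (hsw : IsSpanningTreeB inc (insert p (T.erase q))) : jtSEP T p q := by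
  refine ⟨hq, fun hreach => ?_⟩
  have htree : (jtG (insert p (T.erase q))).IsTree := hsw.2
  have hedge : s(Sum.inl (p.2 : V), Sum.inr (p.1 : E)) ∈ (jtG (insert p (T.erase q))).edgeSet := by
    rw [jtG, edgeSet_fromEdgeSet]
    constructor
    · simp only [Finset.coe_image, Set.mem_image, Finset.mem_coe]
      exact ⟨p, Finset.mem_insert_self _ _, rfl⟩
    · simp only [Set.mem_setOf_eq, Sym2.mem_diagSet, Sym2.isDiag_iff_proj_eq]
      exact fun h => Sum.inl_ne_inr h
  have hbridge := (isAcyclic_iff_forall_edge_isBridge.mp htree.IsAcyclic) hedge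
  rw [isBridge_iff] at hbridge
  apply hbridge
  refine hreach.mono ?_
  intro x y hxy
  obtain ⟨r', hr', hor⟩ := jtG_adj.mp hxy
  have hr'p : r' ≠ p := fun h => hpT (h ▸ Finset.mem_of_mem_erase hr')
  rw [deleteEdges, sdiff_adj]
  constructor
  · exact jtG_adj.mpr ⟨r', Finset.mem_insert_of_mem hr', hor⟩
  · rw [fromEdgeSet_adj]
    rintro ⟨hmem, -⟩
    simp only [Set.mem_singleton_iff] at hmem
    apply hr'p
    apply jt_bipSym2_inj
    show bipSym2 r' = bipSym2 p
    rw [bipSym2, bipSym2]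
    rcases hor with ⟨h1, h2⟩ | ⟨h1, h2⟩
    · rw [← h1, ← h2]; exact hmem
    · rw [← h1, ← h2, Sym2.eq_swap]; exact hmem

lemma jt_sep_sides (hsT : IsSpanningTreeB inc T) {q : E × V} (hsep : jtSEP T p q) :
    ∃ a b : V ⊕ E,
      ((a = Sum.inl q.2 ∧ b = Sum.inr q.1) ∨ (a = Sum.inr q.1 ∧ b = Sum.inl q.2)) ∧
      Sum.inr p.1 ∈ jtSide (T.erase q) a ∧ Sum.inl p.2 ∈ jtSide (T.erase q) b ∧
      ¬ (jtG (T.erase q)).Reachable a b := by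
  obtain ⟨hq, hnr⟩ := hsep
  have hdiff : ∀ z : V ⊕ E, Sum.inr p.1 ∈ jtSide (T.erase q) z →
      Sum.inl p.2 ∈ jtSide (T.erase q) z → False := by
    intro z he hv
    exact hnr (hv.trans he.symm)
  rcases jt_side_total hsT hq (Sum.inr p.1) with he | he <;>
    rcases jt_side_total hsT hq (Sum.inl p.2) with hv | hv
  · exact absurd hv (fun h => hdiff _ he h)
  · refine ⟨Sum.inl q.2, Sum.inr q.1, Or.inl ⟨rfl, rfl⟩, he, hv, fun hr => ?_⟩
    exact hnr (hv.trans (hr.symm.trans he.symm))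
  · refine ⟨Sum.inr q.1, Sum.inl q.2, Or.inr ⟨rfl, rfl⟩, he, hv, fun hr => ?_⟩
    exact hnr (hv.trans (hr.symm.trans he.symm))
  · exact absurd hv (fun h => hdiff _ he h)

lemma jt_Bsub (hsT : IsSpanningTreeB inc T) {q r : E × V} (hq : q ∈ T)
    (hr : r ∈ T.erase q) {a b b' : V ⊕ E}
    (hra : Sum.inr r.1 ∈ jtSide (T.erase q) a ∨ Sum.inl r.2 ∈ jtSide (T.erase q) a)
    (hdisjq : ¬ (jtG (T.erase q)).Reachable a b)
    (hvq : Sum.inl p.2 ∈ jtSide (T.erase q) b)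
    (hvr : Sum.inl p.2 ∈ jtSide (T.erase r) b')
    {n : V ⊕ E} (hn : n ∈ jtSide (T.erase q) b) : n ∈ jtSide (T.erase r) b' := by
  have hdisj' : ¬ (jtG (T.erase q)).Reachable b a := fun h => hdisjq h.symm
  have transfer : ∀ m : V ⊕ E, m ∈ jtSide (T.erase q) b →
      (jtG (T.erase r)).Reachable m b := by
    intro m hm
    have hfar : ∃ zz, (zz = Sum.inl r.2 ∨ zz = Sum.inr r.1) ∧
        ¬ (jtG (T.erase q)).Reachable zz b := by
      rcases hra with h | h
      · exact ⟨Sum.inr r.1, Or.inr rfl, fun hc => jt_side_pair_disj hdisj' hc h⟩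
      · exact ⟨Sum.inl r.2, Or.inl rfl, fun hc => jt_side_pair_disj hdisj' hc h⟩
    obtain ⟨zz, hzz, hfar⟩ := hfar
    have h1 : (jtG ((T.erase q).erase r)).Reachable m b :=
      jt_reach_erase_of_far hzz hm hfar
    exact h1.mono (jtG_mono (Finset.erase_subset_erase r (Finset.erase_subset q T)))
  have hbv : (jtG (T.erase r)).Reachable b (Sum.inl p.2) := (transfer _ hvq).symm
  exact (transfer n hn).trans (hbv.trans hvr)

end Sep


section Main

variable {R : Ribbon inc} {T : Finset (E × V)} {bas : (V ⊕ E) × (E × V)} {L : ℕ}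
  {p : E × V}

lemma jt_flip {q : E × V} {a b : V ⊕ E}
    (hab : (a = Sum.inl q.2 ∧ b = Sum.inr q.1) ∨ (a = Sum.inr q.1 ∧ b = Sum.inl q.2)) :
    (b = Sum.inl q.2 ∧ a = Sum.inr q.1) ∨ (b = Sum.inr q.1 ∧ a = Sum.inl q.2) := by
  rcases hab with ⟨h1, h2⟩ | ⟨h1, h2⟩
  · exact Or.inr ⟨h2, h1⟩
  · exact Or.inl ⟨h2, h1⟩

lemma jt_incTo_of_pair {q : E × V} {a b : V ⊕ E}
    (hab : (a = Sum.inl q.2 ∧ b = Sum.inr q.1) ∨ (a = Sum.inr q.1 ∧ b = Sum.inl q.2)) :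
    IncTo q a := by
  rcases hab with ⟨h1, h2⟩ | ⟨h1, h2⟩
  · exact Or.inl h1
  · exact Or.inr h1

lemma jt_total_ab (hsT : IsSpanningTreeB inc T) {q : E × V} (hq : q ∈ T) {a b : V ⊕ E}
    (hab : (a = Sum.inl q.2 ∧ b = Sum.inr q.1) ∨ (a = Sum.inr q.1 ∧ b = Sum.inl q.2))
    (n : V ⊕ E) : n ∈ jtSide (T.erase q) a ∨ n ∈ jtSide (T.erase q) b := by
  rcases hab with ⟨rfl, rfl⟩ | ⟨rfl, rfl⟩
  · exact jt_side_total hsT hq n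
  · exact (jt_side_total hsT hq n).symm

lemma jt_ML (hsT : IsSpanningTreeB inc T) (hbas : IsBasis (inc := inc) bas)
    (hp : inc p.1 p.2) (hpT : p ∉ T)
    (hL0 : 0 < L) (hL2 : tourState R T bas L = bas)
    (hL3 : ∀ j, 0 < j → j < L → tourState R T bas j ≠ bas)
    {t₁ t₂ : ℕ} (ht₂L : t₂ < L) (ht12 : t₁ < t₂)
    (hst₁ : tourState R T bas t₁ = (Sum.inr p.1, p))
    (hst₂ : tourState R T bas t₂ = (Sum.inl p.2, p))
    {t₀ : ℕ} (hcy₀ : NodeOnFundCycle inc T p ((tourState R T bas t₀).1))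
    (ht₀e : ∀ j ≤ t₀, (tourState R T bas j).1 ≠ Sum.inr p.1) :
    ∀ (N : ℕ) (q : E × V) (a b : V ⊕ E),
      jtSEP T p q →
      ((a = Sum.inl q.2 ∧ b = Sum.inr q.1) ∨ (a = Sum.inr q.1 ∧ b = Sum.inl q.2)) →
      Sum.inr p.1 ∈ jtSide (T.erase q) a →
      Sum.inl p.2 ∈ jtSide (T.erase q) b →
      ¬ (jtG (T.erase q)).Reachable a b →
      bas.1 ∈ jtSide (T.erase q) a →
      (jtSide (T.erase q) a).ncard ≤ N →
      ∀ s, s < L → (tourState R T bas s).1 = Sum.inr p.1 →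
      ∀ cB, cB < L → tourState R T bas cB = (b, q) → s ≤ cB := by
  intro N
  induction N using Nat.strong_induction_on with
  | _ N IH =>
  intro q a b hsep hab he hv hdisj hbas0 hcard s hsL hs cB hcBL hscB
  by_contra hcon
  push_neg at hcon
  have hq : q ∈ T := hsep.1
  have ht₁L : t₁ < L := lt_trans ht12 ht₂L
  have hdisj' : ¬ (jtG (T.erase q)).Reachable b a := fun h => hdisj h.symm
  obtain ⟨cA, hcAL, hscA⟩ :=
    jt_corner_exists hsT hbas hL0 hL2 (hsT.1 q hq) (jt_incTo_of_pair hab)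
  have hnodecA : (tourState R T bas cA).1 = a := by rw [hscA]
  have hnodecB : (tourState R T bas cB).1 = b := by rw [hscB]
  have ht₁a : (tourState R T bas t₁).1 ∈ jtSide (T.erase q) a := by
    have : (tourState R T bas t₁).1 = Sum.inr p.1 := by rw [hst₁]
    rw [this]; exact he
  have ht₂b : (tourState R T bas t₂).1 ∈ jtSide (T.erase q) b := by
    have : (tourState R T bas t₂).1 = Sum.inl p.2 := by rw [hst₂]
    rw [this]; exact hv
  have hsa : (tourState R T bas s).1 ∈ jtSide (T.erase q) a := by rw [hs]; exact he
  -- `cA < cB`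
  have hAB : cA < cB ∧ cB ≤ cB := by
    refine jt_blockF hq (jt_flip hab) hdisj' hbas hL0 hL2 hL3 hcBL hscB hcAL hscA hbas0 hcBL ?_
    rw [hnodecB]; exact jtSide_self
  -- `t₂ ∈ (cA, cB]`
  have hT2 : cA < t₂ ∧ t₂ ≤ cB :=
    jt_blockF hq (jt_flip hab) hdisj' hbas hL0 hL2 hL3 hcBL hscB hcAL hscA hbas0 ht₂L ht₂b
  -- `t₁ ≤ cA`
  have hT1 : t₁ ≤ cA := by
    rcases jt_blockF' hq hab hdisj hbas hL0 hL2 hL3 hcAL hscA hcBL hscB ht₁L ht₁a with h | h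
    · exact h
    · omega
  -- find the inner separating edge `r`
  obtain ⟨r, hrS, hsep', hend1, hend2⟩ : ∃ r, r ∈ T.erase q ∧ jtSEP T p r ∧
      Sum.inl r.2 ∈ jtSide (T.erase q) a ∧ Sum.inr r.1 ∈ jtSide (T.erase q) a := by
    by_cases hae : a = Sum.inr p.1
    · -- use the first-reached cycle node
      classical
      have hexCN : ∃ t, NodeOnFundCycle inc T p ((tourState R T bas t).1) := ⟨t₀, hcy₀⟩
      have hx := Nat.find_spec hexCN
      have htstar_le : Nat.find hexCN ≤ t₀ := Nat.find_min' hexCN hcy₀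
      set x := (tourState R T bas (Nat.find hexCN)).1 with hxdef
      have hxne : x ≠ Sum.inr p.1 := ht₀e _ htstar_le
      have hcAe : (tourState R T bas cA).1 = Sum.inr p.1 := by rw [hnodecA, hae]
      have ht₀cA : t₀ < cA := by
        by_contra h
        push_neg at h
        exact ht₀e cA h hcAe
      have hxA : x ∈ jtSide (T.erase q) a := by
        rcases jt_total_ab hsT hq hab x with h | h
        · exact h
        · exfalso
          have := jt_blockF hq (jt_flip hab) hdisj' hbas hL0 hL2 hL3 hcBL hscB hcAL hscA
            hbas0 (show Nat.find hexCN < L by omega) h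
          omega
      have hxv : x ≠ Sum.inl p.2 := by
        intro hh
        exact jt_side_pair_disj hdisj hxA (by rw [hh] at hxA ⊢; exact hv) |>.elim
      rcases hx with hxp | ⟨q', hq'T, hq'x, hsw⟩
      · rcases hxp with h | h
        · exact absurd h hxv
        · exact absurd h hxne
      · have hsep' := jt_sep_of_swap hpT hq'T hsw
        have hq'ne : q' ≠ q := by
          rintro rfl
          rcases hq'x with h | h
          · rcases hab with ⟨h1, -⟩ | ⟨-, h2⟩
            · -- a = inl q.2 contradicts a = inr p.1
              rw [hae] at h1; exact Sum.inl_ne_inr h1.symm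
            · -- b = inl q.2 : x = b ∈ side b, x ∈ side a
              apply jt_side_pair_disj hdisj hxA
              rw [h, ← h2]; exact jtSide_self
          · rcases hab with ⟨-, h2⟩ | ⟨h1, -⟩
            · apply jt_side_pair_disj hdisj hxA
              rw [h, ← h2]; exact jtSide_self
            · exact hxne ((h.trans h1.symm).trans hae)
        have hq'mem : q' ∈ T.erase q := Finset.mem_erase.mpr ⟨hq'ne, hq'T⟩
        have hadj : (jtG (T.erase q)).Adj (Sum.inl q'.2) (Sum.inr q'.1) :=
          jtG_adj.mpr ⟨q', hq'mem, Or.inl ⟨rfl, rfl⟩⟩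
        rcases hq'x with h | h
        · exact ⟨q', hq'mem, hsep', h ▸ hxA, jtSide_adj hadj.symm (h ▸ hxA)⟩
        · exact ⟨q', hq'mem, hsep', jtSide_adj hadj (h ▸ hxA), h ▸ hxA⟩
    · -- use the first edge of the tree path from `a` towards `e`
      obtain ⟨w0⟩ : (jtG (T.erase q)).Reachable a (Sum.inr p.1) := he.symm
      obtain ⟨w, hwpath⟩ := w0.toPath
      cases w with
      | nil => exact absurd rfl hae
      | @cons _ y _ hadj w2 =>
        rw [SimpleGraph.Walk.cons_isPath_iff] at hwpath
        obtain ⟨hw2path, hanotin⟩ := hwpath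
        obtain ⟨r, hrS, hor⟩ := jtG_adj.mp hadj
        have hrT : r ∈ T := Finset.mem_of_mem_erase hrS
        have hyA : y ∈ jtSide (T.erase q) a := jtSide_adj hadj.symm jtSide_self
        have hzz : a = Sum.inl r.2 ∨ a = Sum.inr r.1 := by
          rcases hor with ⟨h1, -⟩ | ⟨h1, -⟩
          · exact Or.inl h1
          · exact Or.inr h1
        have hbridge : ¬ (jtG (T.erase r)).Reachable (Sum.inl r.2) (Sum.inr r.1) :=
          jt_side_disj hsT hrT
        have h1 : ¬ (jtG (T.erase r)).Reachable a (Sum.inr p.1) := by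
          intro hcontra
          have hy_e : (jtG (T.erase r)).Reachable y (Sum.inr p.1) := by
            have h' : (jtG ((T.erase q).erase r)).Reachable y (Sum.inr p.1) :=
              jt_reach_erase_of_not_support hzz w2 hanotin
            exact h'.mono (jtG_mono (Finset.erase_subset_erase r (Finset.erase_subset q T)))
          have haay : (jtG (T.erase r)).Reachable a y := hcontra.trans hy_e.symm
          rcases hor with ⟨h1', h2'⟩ | ⟨h1', h2'⟩
          · exact hbridge (h1' ▸ h2' ▸ haay)
          · exact hbridge (h1' ▸ h2' ▸ haay).symm
        have hsep' : jtSEP T p r := by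
          refine ⟨hrT, fun hve => ?_⟩
          have hvb : (jtG (T.erase r)).Reachable (Sum.inl p.2) b := by
            have hfar : ¬ (jtG (T.erase q)).Reachable a b := hdisj
            have h' := jt_reach_erase_of_far hzz hv hfar
            exact h'.mono (jtG_mono (Finset.erase_subset_erase r (Finset.erase_subset q T)))
          have hqr : q ∈ T.erase r := Finset.mem_erase.mpr
            ⟨fun hh => (Finset.mem_erase.mp hrS).1 hh.symm, hq⟩
          have hadjba : (jtG (T.erase r)).Adj b a := by
            apply jtG_adj.mpr
            refine ⟨q, hqr, ?_⟩
            rcases hab with ⟨h1', h2'⟩ | ⟨h1', h2'⟩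
            · exact Or.inr ⟨h2', h1'⟩
            · exact Or.inl ⟨h2', h1'⟩
          exact h1 ((hadjba.symm.reachable).trans (hvb.symm.trans hve))
        refine ⟨r, hrS, hsep', ?_, ?_⟩
        · rcases hor with ⟨h1', h2'⟩ | ⟨h1', h2'⟩
          · rw [← h1']; exact jtSide_self
          · rw [← h2']; exact hyA
        · rcases hor with ⟨h1', h2'⟩ | ⟨h1', h2'⟩
          · rw [← h2']; exact hyA
          · rw [← h1']; exact jtSide_self
  -- common part: use the inner edge `r`
  have hrT : r ∈ T := Finset.mem_of_mem_erase hrS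
  obtain ⟨a', b', hab', he', hv', hdisjr⟩ := jt_sep_sides hsT hsep'
  have hdisjr' : ¬ (jtG (T.erase r)).Reachable b' a' := fun h => hdisjr h.symm
  have hBB : ∀ n, n ∈ jtSide (T.erase q) b → n ∈ jtSide (T.erase r) b' :=
    fun n hn => jt_Bsub hsT hq hrS (Or.inl hend2) hdisj hv hv' hn
  have hAA : ∀ n, n ∈ jtSide (T.erase r) a' → n ∈ jtSide (T.erase q) a := by
    intro n hn
    rcases jt_total_ab hsT hq hab n with h | h
    · exact h
    · exact absurd (hBB n h) (fun hh => jt_side_pair_disj hdisjr hn hh)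
  have hb'A : b' ∈ jtSide (T.erase q) a := by
    rcases hab' with ⟨-, h2⟩ | ⟨-, h2⟩
    · rw [h2]; exact hend2
    · rw [h2]; exact hend1
  have hb'nota' : b' ∉ jtSide (T.erase r) a' := fun h =>
    jt_side_pair_disj hdisjr' jtSide_self h
  have hlt : (jtSide (T.erase r) a').ncard < (jtSide (T.erase q) a).ncard := by
    apply Set.ncard_lt_ncard
    · rw [Set.ssubset_iff_of_subset (fun n hn => hAA n hn)]
      exact ⟨b', hb'A, hb'nota'⟩
    · exact Set.toFinite _
  obtain ⟨cA', hcA'L, hscA'⟩ :=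
    jt_corner_exists hsT hbas hL0 hL2 (hsT.1 r hrT) (jt_incTo_of_pair hab')
  obtain ⟨cB', hcB'L, hscB'⟩ :=
    jt_corner_exists hsT hbas hL0 hL2 (hsT.1 r hrT) (jt_incTo_of_pair (jt_flip hab'))
  have ht₁a' : (tourState R T bas t₁).1 ∈ jtSide (T.erase r) a' := by
    have : (tourState R T bas t₁).1 = Sum.inr p.1 := by rw [hst₁]
    rw [this]; exact he'
  have hsa' : (tourState R T bas s).1 ∈ jtSide (T.erase r) a' := by rw [hs]; exact he'
  have hcBb' : (tourState R T bas cB).1 ∈ jtSide (T.erase r) b' := by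
    rw [hnodecB]; exact hBB b jtSide_self
  rcases jt_total_ab hsT hrT hab' bas.1 with hb0 | hb0
  · -- basis on the `e`-side of `r` : use the induction hypothesis
    have hsle : s ≤ cB' := IH (jtSide (T.erase r) a').ncard (lt_of_lt_of_le hlt hcard)
      r a' b' hsep' hab' he' hv' hdisjr hb0 le_rfl s hsL hs cB' hcB'L hscB'
    have hscA'2 : s ≤ cA' := by
      rcases jt_blockF' hrT hab' hdisjr hbas hL0 hL2 hL3 hcA'L hscA' hcB'L hscB' hsL hsa'
        with h | h
      · exact h
      · omega
    have := jt_blockF hrT (jt_flip hab') hdisjr' hbas hL0 hL2 hL3 hcB'L hscB' hcA'L hscA'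
      hb0 hcBL hcBb'
    omega
  · -- basis on the `v`-side of `r`
    have h_t₁ := jt_blockF hrT hab' hdisjr hbas hL0 hL2 hL3 hcA'L hscA' hcB'L hscB' hb0
      ht₁L ht₁a'
    have h_s := jt_blockF hrT hab' hdisjr hbas hL0 hL2 hL3 hcA'L hscA' hcB'L hscB' hb0
      hsL hsa'
    have h_cB := jt_blockF' hrT (jt_flip hab') hdisjr' hbas hL0 hL2 hL3 hcB'L hscB'
      hcA'L hscA' hcBL hcBb'
    rcases h_cB with h | h
    · omega
    · omega

end Main

/-- If `T` is a Jaeger tree, `ev ∉ T`, and the first node of the fundamental cycle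
`C(T, ev)` reached in the tour of `T` is not `e`, then every emerald node `f` of
`C(T, ev)` either equals `e` or is last visited (within one full tour, of length `L`)
later than the last visit of `e`. -/
theorem fund_cycle_last_visits (R : Ribbon inc) (hconn : (bipGraph inc).Connected)
    (bas : (V ⊕ E) × (E × V)) (hbas : IsBasis (inc := inc) bas)
    (T : Finset (E × V)) (hT : IsJaeger R bas T)
    (p : E × V) (hp : inc p.1 p.2) (hpT : p ∉ T)
    (L : ℕ) (hL : 0 < L ∧ tourState R T bas L = bas ∧
      ∀ j, 0 < j → j < L → tourState R T bas j ≠ bas)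
    (hfirst : ∃ n : V ⊕ E, NodeOnFundCycle inc T p n ∧ n ≠ Sum.inr p.1 ∧
      reachedBefore R T bas n (Sum.inr p.1)) :
    ∀ f : E, NodeOnFundCycle inc T p (Sum.inr f) →
      f = p.1 ∨ ∃ k < L, (tourState R T bas k).1 = Sum.inr f ∧
        ∀ j < L, (tourState R T bas j).1 = Sum.inr p.1 → j < k := by
  obtain ⟨hL0, hL2, hL3⟩ := hL
  obtain ⟨hsT, hJ⟩ := hT
  intro f hf
  by_cases hfe : f = p.1
  · exact Or.inl hfe
  · right
    have hfq : ∃ q ∈ T, IncTo q (Sum.inr f) ∧ IsSpanningTreeB inc (insert p (T.erase q)) := by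
      rcases hf with hIncp | h
      · rcases hIncp with h | h
        · exact absurd h (fun hh => Sum.inl_ne_inr hh.symm)
        · exact absurd (Sum.inr.inj (α := V) h) hfe
      · exact h
    obtain ⟨q, hqT, hqf, hsw⟩ := hfq
    have hsep := jt_sep_of_swap hpT hqT hsw
    obtain ⟨a, b, hab, he, hv, hdisj⟩ := jt_sep_sides hsT hsep
    obtain ⟨k₁, hk₁, hbef₁⟩ := hJ p hp hpT
    have ht₁L : k₁ % L < L := Nat.mod_lt _ hL0
    have hst₁ : tourState R T bas (k₁ % L) = (Sum.inr p.1, p) :=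
      (jt_mod hL0 hL2 k₁).symm.trans hk₁
    obtain ⟨t₂, ht₂L, hst₂⟩ := jt_corner_exists hsT hbas hL0 hL2 hp (Or.inl rfl)
    have ht12 : k₁ % L < t₂ := by
      by_contra h
      push_neg at h
      exact hbef₁ t₂ (le_trans h (Nat.mod_le k₁ L)) hst₂
    obtain ⟨n₀, hn₀CN, hn₀ne, k₀, hk₀, hbef₀⟩ := hfirst
    have hcy₀ : NodeOnFundCycle inc T p ((tourState R T bas (k₀ % L)).1) := by
      have h1 : (tourState R T bas (k₀ % L)).1 = n₀ := by
        rw [← jt_mod hL0 hL2 k₀, hk₀]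
      rw [h1]; exact hn₀CN
    have ht₀e : ∀ j ≤ k₀ % L, (tourState R T bas j).1 ≠ Sum.inr p.1 :=
      fun j hj => hbef₀ j (le_trans hj (Nat.mod_le _ _))
    have hfb : Sum.inr f = a ∨ Sum.inr f = b := by
      rcases (hqf : Sum.inr f = Sum.inl q.2 ∨ Sum.inr f = Sum.inr q.1) with h | h
      · exact absurd h (fun hh => Sum.inl_ne_inr hh.symm)
      · rcases hab with ⟨h1, h2⟩ | ⟨h1, h2⟩
        · exact Or.inr (h.trans h2.symm)
        · exact Or.inl (h.trans h1.symm)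
    obtain ⟨cA, hcAL, hscA⟩ :=
      jt_corner_exists hsT hbas hL0 hL2 (hsT.1 q hqT) (jt_incTo_of_pair hab)
    obtain ⟨cB, hcBL, hscB⟩ :=
      jt_corner_exists hsT hbas hL0 hL2 (hsT.1 q hqT) (jt_incTo_of_pair (jt_flip hab))
    have hfne_e : Sum.inr f ≠ Sum.inr p.1 := fun h => hfe (Sum.inr.inj (α := V) h)
    rcases jt_total_ab hsT hqT hab bas.1 with hb0 | hb0
    · -- basis on the `e`-side of `q`
      have hML := jt_ML hsT hbas hp hpT hL0 hL2 hL3 ht₂L ht12 hst₁ hst₂ hcy₀ ht₀e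
        (jtSide (T.erase q) a).ncard q a b hsep hab he hv hdisj hb0 le_rfl
      have heA : ∀ j, j < L → (tourState R T bas j).1 = Sum.inr p.1 → j ≤ cA := by
        intro j hjL hje
        have h1 : j ≤ cB := hML j hjL hje cB hcBL hscB
        have hja : (tourState R T bas j).1 ∈ jtSide (T.erase q) a := by rw [hje]; exact he
        rcases jt_blockF' hqT hab hdisj hbas hL0 hL2 hL3 hcAL hscA hcBL hscB hjL hja
          with h | h
        · exact h
        · omega
      have hcAcB : cA < cB ∧ cB ≤ cB := by
        refine jt_blockF hqT (jt_flip hab) (fun h => hdisj h.symm) hbas hL0 hL2 hL3 hcBL hscB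
          hcAL hscA hb0 hcBL ?_
        rw [show (tourState R T bas cB).1 = b by rw [hscB]]
        exact jtSide_self
      rcases hfb with hfa | hfbb
      · refine ⟨cA, hcAL, by rw [hscA]; exact hfa.symm, ?_⟩
        intro j hjL hje
        have h1 := heA j hjL hje
        have hne : j ≠ cA := by
          intro hh
          rw [hh, hscA] at hje
          exact hfne_e (hfa.trans hje)
        omega
      · refine ⟨cA + 1, by omega, ?_, ?_⟩
        · rw [jt_cross_next hqT hab hscA]
          exact hfbb.symm
        · intro j hjL hje
          have := heA j hjL hje
          omega
    · -- basis on the `v`-side of `q`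
      have heA : ∀ j, j < L → (tourState R T bas j).1 = Sum.inr p.1 → cB < j ∧ j ≤ cA := by
        intro j hjL hje
        exact jt_blockF hqT hab hdisj hbas hL0 hL2 hL3 hcAL hscA hcBL hscB hb0 hjL
          (by rw [hje]; exact he)
      rcases hfb with hfa | hfbb
      · refine ⟨cA, hcAL, by rw [hscA]; exact hfa.symm, ?_⟩
        intro j hjL hje
        have h1 := (heA j hjL hje).2
        have hne : j ≠ cA := by
          intro hh
          rw [hh, hscA] at hje
          exact hfne_e (hfa.trans hje)
        omega
      · have ht₂or : t₂ ≤ cB ∨ cA < t₂ := by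
          rcases jt_blockF' hqT (jt_flip hab) (fun h => hdisj h.symm) hbas hL0 hL2 hL3 hcBL
            hscB hcAL hscA ht₂L
            (by rw [show (tourState R T bas t₂).1 = Sum.inl p.2 by rw [hst₂]]; exact hv)
            with h | h
          · exact Or.inl h
          · exact Or.inr h
        have ht₁' := heA (k₁ % L) ht₁L (by rw [hst₁])
        have hcA1L : cA + 1 < L := by
          rcases ht₂or with h | h <;> omega
        refine ⟨cA + 1, hcA1L, ?_, ?_⟩
        · rw [jt_cross_next hqT hab hscA]
          exact hfbb.symm
        · intro j hjL hje
          have := (heA j hjL hje).2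
          omega
end

section
/- There exists a graph G (with 3 vertices, edges a,b,c,d where a,b are parallel edges and c,d form a path) and an assignment of a linear order on edges to each of its five spanning trees cd, bd, bc, ac, ad (namely a<b<c<d for cd, bd, bc; a<d<b<c for ac; a<d<c<b for ad), such that the resulting activity notion (e is internally/externally active for a tree T if the corresponding exchange with any smaller element fails) induces a partition of {0,1}^E into the Crapo intervals of the spanning trees, yet every edge is nontrivially active for some spanning tree — so this activity notion cannot arise from any Δ-activity, since a Δ-activity always has an element (the root label) that is never nontrivially active. -/
variable {V EdgeT : Type*} [Fintype V] [Fintype EdgeT] [DecidableEq V] [DecidableEq EdgeT]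

/-- `S` is (the edge set of) a spanning tree of the multigraph on vertex set `V`
whose edges are `EdgeT` with endpoint map `ends`. -/
def IsSpanningTree (ends : EdgeT → Sym2 V) (S : Finset EdgeT) : Prop :=
  (∀ ε ∈ S, ¬ (ends ε).IsDiag) ∧ Set.InjOn ends ↑S ∧
    (SimpleGraph.fromEdgeSet (↑(S.image ends) : Set (Sym2 V))).IsTree

/-- `η` is an edge of the fundamental cycle `C(T, ε)` of the non-tree edge `ε`
with respect to the spanning tree `T`: it is either `ε` itself, or a tree edge whose
exchange with `ε` again yields a spanning tree. -/
def InFundCycle (ends : EdgeT → Sym2 V) (T : Finset EdgeT) (ε η : EdgeT) : Prop :=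
  η = ε ∨ (η ∈ T ∧ IsSpanningTree ends (insert ε (T.erase η)))

/-- The graph on vertices `u = 0`, `v = 1`, `w = 2` with edges `a = vw`, `b = vw`
(parallel), `c = uv`, `d = uw`, where `a,b,c,d` are `0,1,2,3 : Fin 4`. -/
def ends19 : Fin 4 → Sym2 (Fin 3) := fun e =>
  if e = 0 then s(1, 2) else if e = 1 then s(1, 2) else if e = 2 then s(0, 1) else s(0, 2)

/-- The position of edge `e` in the linear order assigned to the spanning tree `T`:
the order is `a < d < b < c` for `T = ac`, `a < d < c < b` for `T = ad`,
and `a < b < c < d` for the other trees. -/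
def rk19 (T : Finset (Fin 4)) (e : Fin 4) : ℕ :=
  if T = {0, 2} then (if e = 0 then 0 else if e = 3 then 1 else if e = 1 then 2 else 3)
  else if T = {0, 3} then (if e = 0 then 0 else if e = 3 then 1 else if e = 2 then 2 else 3)
  else (e : ℕ)

/-- The order `<_T` associated to the spanning tree `T`. -/
def lt19 (T : Finset (Fin 4)) (e f : Fin 4) : Prop := rk19 T e < rk19 T f

/-- `e` is internally active for `T` w.r.t. the order `<_T`. -/
def IntAct19 (T : Finset (Fin 4)) (e : Fin 4) : Prop :=
  ∀ f, lt19 T f e → ¬ IsSpanningTree ends19 (insert f (T.erase e))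

/-- `e` is externally active for `T` w.r.t. the order `<_T`. -/
def ExtAct19 (T : Finset (Fin 4)) (e : Fin 4) : Prop :=
  ∀ f, lt19 T f e → ¬ IsSpanningTree ends19 (insert e (T.erase f))

/-- The Crapo interval of the spanning tree `T`: subsets `S ⊆ E` (i.e. vectors in
`{0,1}^E`) that exceed `T` only at externally active edges and fall below `T` only at
internally active edges. -/
def Crapo19 (T : Finset (Fin 4)) : Set (Finset (Fin 4)) :=
  {S | (∀ e ∈ S, e ∉ T → ExtAct19 T e) ∧ (∀ e ∈ T, e ∉ S → IntAct19 T e)}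


section Dec
open SimpleGraph

instance crpDecMemCoe (F : Finset (Sym2 (Fin 3))) :
    DecidablePred (· ∈ (↑F : Set (Sym2 (Fin 3)))) :=
  fun e => decidable_of_iff (e ∈ F) Finset.mem_coe.symm

instance crpDecAdjFrom (s : Set (Sym2 (Fin 3))) [DecidablePred (· ∈ s)] :
    DecidableRel (fromEdgeSet s).Adj :=
  fun _ _ => decidable_of_iff _ (fromEdgeSet_adj s).symm

instance crpDecAdjSdiff (G H : SimpleGraph (Fin 3)) [DecidableRel G.Adj] [DecidableRel H.Adj] :
    DecidableRel (G \ H).Adj := fun _ _ => decidable_of_iff _ (sdiff_adj ..).symm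

instance crpDecBridge (G : SimpleGraph (Fin 3)) [DecidableRel G.Adj] (u v : Fin 3) :
    Decidable (G.IsBridge s(u, v)) :=
  decidable_of_iff _ (isBridge_iff).symm

instance crpDecAcyclic (G : SimpleGraph (Fin 3)) [DecidableRel G.Adj] : Decidable G.IsAcyclic :=
  decidable_of_iff (∀ v w, G.Adj v w → G.IsBridge s(v, w))
    (by rw [isAcyclic_iff_forall_adj_isBridge])

instance crpDecConnected (G : SimpleGraph (Fin 3)) [DecidableRel G.Adj] :
    Decidable G.Connected :=
  decidable_of_iff G.Preconnected (by rw [connected_iff]; exact ⟨fun h => ⟨h, ⟨0⟩⟩, fun h => h.1⟩)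

instance crpDecTree (G : SimpleGraph (Fin 3)) [DecidableRel G.Adj] : Decidable G.IsTree :=
  decidable_of_iff _ (isTree_iff G).symm

instance crpDecInjOn (S : Finset (Fin 4)) : Decidable (Set.InjOn ends19 ↑S) :=
  decidable_of_iff (∀ x ∈ S, ∀ y ∈ S, ends19 x = ends19 y → x = y)
    ⟨fun h x hx y hy => h x hx y hy, fun h _ hx _ hy => h hx hy⟩

instance crpDecST (S : Finset (Fin 4)) : Decidable (IsSpanningTree ends19 S) := by
  unfold IsSpanningTree; infer_instance

end Dec

/-- The spanning trees of `ends19` are exactly `cd`, `bd`, `bc`, `ac`, `ad`. -/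
lemma key19 (S : Finset (Fin 4)) :
    IsSpanningTree ends19 S ↔
      (S = {2,3} ∨ S = {1,3} ∨ S = {1,2} ∨ S = {0,2} ∨ S = {0,3}) := by
  revert S; decide

set_option synthInstance.maxHeartbeats 1000000 in
set_option synthInstance.maxSize 2000 in
set_option maxHeartbeats 4000000 in
/-- The activities given by the orders `lt19` yield a partition of `{0,1}^E` into Crapo
intervals of the spanning trees, yet every edge is nontrivially (internally or
externally) active for some spanning tree; hence (by the analogue of Courtiel's
observation that the root label of a decision tree is never nontrivially active)
this activity notion cannot arise from any Δ-activity. -/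
theorem courtiel_counterexample :
    (∀ S : Finset (Fin 4), ∃! T : Finset (Fin 4),
        IsSpanningTree ends19 T ∧ S ∈ Crapo19 T) ∧
    (∀ e : Fin 4, ∃ T : Finset (Fin 4), IsSpanningTree ends19 T ∧
        ((e ∈ T ∧ IntAct19 T e) ∨ (e ∉ T ∧ ExtAct19 T e))) := by
  simp only [Crapo19, Set.mem_setOf_eq, IntAct19, ExtAct19, lt19, key19, ExistsUnique]
  decide
end
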